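/- arXiv:1401.2174 — 2 statements merged into one kernel-verified Lean document; each statement's English description precedes it below -/
import Mathlib

section
/- Let Δ be the root system of a complex simple Lie algebra with base of simple roots Δ⁰, and let Σ ⊆ Δ⁰ be a nonempty subset containing a root ζ which is adjacent in the Dynkin diagram to every other root of Σ. If α, α′ ∈ Σ∖{ζ} with α ≠ α′, β ∈ Υ¹_α and β′ ∈ Υ¹_{α′}, then β + β′ is not a root. -/
open scoped RealInnerProductSpace BigOperators Classical

/-- A reduced crystallographic root system in a real inner product space,
together with a chosen base of simple roots and the coordinates of each
root with respect to the base. -/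
structure RootSystemBase (V : Type*) [NormedAddCommGroup V] [InnerProductSpace ℝ V] where
  /-- the set of roots -/
  Δ : Finset V
  /-- the set of simple roots (the base) -/
  Δ0 : Finset V
  base_sub : Δ0 ⊆ Δ
  ne_zero : ∀ β ∈ Δ, β ≠ (0 : V)
  indep : LinearIndependent ℝ (fun a : ↥Δ0 => (a : V))
  neg_mem : ∀ β ∈ Δ, -β ∈ Δ
  /-- `coeff β α` is the coefficient `n_α` of the simple root `α` in `β = ∑ n_α • α` -/
  coeff : V → V → ℤ
  coeff_spec : ∀ β ∈ Δ, β = ∑ α ∈ Δ0, (coeff β α : ℝ) • α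
  coeff_sign : ∀ β ∈ Δ, (∀ α ∈ Δ0, 0 ≤ coeff β α) ∨ (∀ α ∈ Δ0, coeff β α ≤ 0)
  crystal : ∀ α ∈ Δ, ∀ β ∈ Δ, ∃ k : ℤ, 2 * ⟪β, α⟫ / ⟪α, α⟫ = (k : ℝ)
  reflect_mem : ∀ α ∈ Δ, ∀ β ∈ Δ, β - (2 * ⟪β, α⟫ / ⟪α, α⟫) • α ∈ Δ
  reduced : ∀ α ∈ Δ, (2 : ℝ) • α ∉ Δ

namespace RootSystemBase

variable {V : Type*} [NormedAddCommGroup V] [InnerProductSpace ℝ V]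

variable (R : RootSystemBase V)

/-- The height `ht_Σ(β)` of a root `β` relative to a subset `Sg` of the simple roots. -/
def ht (Sg : Finset V) (β : V) : ℤ := ∑ α ∈ Sg, R.coeff β α

/-- positive roots -/
def IsPos (β : V) : Prop := β ∈ R.Δ ∧ ∀ α ∈ R.Δ0, 0 ≤ R.coeff β α

/-- negative roots -/
def IsNeg (β : V) : Prop := β ∈ R.Δ ∧ ∀ α ∈ R.Δ0, R.coeff β α ≤ 0

/-- Irreducibility of the root system (the Dynkin diagram is connected); this is
equivalent to the corresponding complex Lie algebra being simple. -/
def Irred : Prop :=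
  ¬ ∃ S : Finset V, S ⊆ R.Δ0 ∧ S.Nonempty ∧ S ≠ R.Δ0 ∧
      ∀ a ∈ S, ∀ b ∈ R.Δ0, b ∉ S → ⟪a, b⟫ = 0

/-- Adjacency of two (simple) roots in the Dynkin diagram. -/
def Adj (a b : V) : Prop := a ≠ b ∧ ⟪a, b⟫ ≠ 0

end RootSystemBase

namespace RootSystemBase

variable {V : Type*} [NormedAddCommGroup V] [InnerProductSpace ℝ V]

variable (R : RootSystemBase V)

/-- `R.comp ζ α` is the connected component containing `α` of the Dynkin diagram of
`Δ⁰ ∖ {ζ}`:  all simple roots `γ ≠ ζ` joined to `α` by a path of adjacent simple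
roots avoiding `ζ`. -/
def comp (ζ α : V) : Set V :=
  {γ : V | γ ∈ R.Δ0 ∧ γ ≠ ζ ∧
    Relation.ReflTransGen
      (fun u w => u ∈ R.Δ0 ∧ w ∈ R.Δ0 ∧ u ≠ ζ ∧ w ≠ ζ ∧ Adj u w) α γ}

/-- `Υ¹_α`: the roots of the form `β = α + ∑ nᵢ βᵢ` with `βᵢ ∈ Υ_α ∖ {α}` and
`nᵢ > 0` (`m ≥ 0` summands); equivalently the roots of `{α}`-height one in the
subsystem with simple roots `Υ_α`. -/
def Ups1 (ζ α : V) : Set V :=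
  {β : V | β ∈ R.Δ ∧ ∃ n : V → ℕ,
      (∀ γ : V, n γ ≠ 0 → γ ∈ R.comp ζ α ∧ γ ≠ α) ∧
      β = α + ∑ γ ∈ R.Δ0, (n γ : ℝ) • γ}

end RootSystemBase

namespace RootSystemBase

variable {V : Type*} [NormedAddCommGroup V] [InnerProductSpace ℝ V] (R : RootSystemBase V)

lemma inner_self_pos' {a : V} (ha : a ∈ R.Δ) : 0 < ⟪a, a⟫ :=
by
  have h := R.ne_zero a ha
  rw [real_inner_self_eq_norm_mul_norm]
  exact mul_pos (norm_pos_iff.2 h) (norm_pos_iff.2 h)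

lemma sum_coeff_zero {c : V → ℝ} (h : ∑ γ ∈ R.Δ0, c γ • γ = 0) :
    ∀ γ ∈ R.Δ0, c γ = 0 := by
  intro γ hγ
  have h2 : ∑ i : ↥R.Δ0, c i • (i : V) = 0 := by
    rw [Finset.sum_coe_sort R.Δ0 (fun x => c x • x)]; exact h
  have := Fintype.linearIndependent_iff.mp R.indep (fun i => c i) h2 ⟨γ, hγ⟩
  exact this

lemma coeff_unique {β : V} (hβ : β ∈ R.Δ) (c : V → ℝ)
    (hc : β = ∑ γ ∈ R.Δ0, c γ • γ) : ∀ γ ∈ R.Δ0, (R.coeff β γ : ℝ) = c γ := by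
  intro γ hγ
  have h0 : ∑ γ ∈ R.Δ0, ((R.coeff β γ : ℝ) - c γ) • γ = 0 := by
    simp only [sub_smul, Finset.sum_sub_distrib]
    rw [← R.coeff_spec β hβ, ← hc, sub_self]
  have := R.sum_coeff_zero h0 γ hγ
  linarith

lemma single_expand {α : V} (hα : α ∈ R.Δ0) :
    ∑ γ ∈ R.Δ0, (if γ = α then (1:ℝ) else 0) • γ = α := by
  simp only [ite_smul, zero_smul, one_smul]
  simp [Finset.sum_ite_eq', hα]

lemma inner_nonpos_of_ne {a b : V} (ha : a ∈ R.Δ0) (hb : b ∈ R.Δ0) (hab : a ≠ b) :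
    ⟪a, b⟫ ≤ 0 := by
  by_contra hpos
  push_neg at hpos
  have haΔ := R.base_sub ha
  have hbΔ := R.base_sub hb
  obtain ⟨k, hk⟩ := R.crystal a haΔ b hbΔ
  have haa := R.inner_self_pos' haΔ
  have hba : 0 < ⟪b, a⟫ := by rwa [real_inner_comm]
  have hkpos : 0 < (k : ℝ) := by rw [← hk]; positivity
  set γ : V := b - (2 * ⟪b, a⟫ / ⟪a, a⟫) • a with hγdef
  have hγ : γ ∈ R.Δ := R.reflect_mem a haΔ b hbΔ
  set c : V → ℝ := fun x => (if x = b then (1:ℝ) else 0) - k * (if x = a then 1 else 0) with hcdef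
  have hγeq : γ = ∑ x ∈ R.Δ0, c x • x := by
    simp only [hcdef, sub_smul, Finset.sum_sub_distrib, mul_smul]
    rw [← Finset.smul_sum, R.single_expand hb, R.single_expand ha, hγdef, hk]
  have hcu := R.coeff_unique hγ c hγeq
  have hcb : (R.coeff γ b : ℝ) = 1 := by
    rw [hcu b hb]; simp [hcdef, (Ne.symm hab)]
  have hca : (R.coeff γ a : ℝ) = -k := by
    rw [hcu a ha]; simp [hcdef, hab]
  have hk1 : (1:ℤ) ≤ k := by exact_mod_cast hkpos
  have hcb' : R.coeff γ b = 1 := by exact_mod_cast hcb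
  have hca' : R.coeff γ a = -k := by exact_mod_cast hca
  rcases R.coeff_sign γ hγ with hp | hn
  · have := hp a ha; omega
  · have := hn b hb; omega

lemma strong_neighbor {a b : V} (ha : a ∈ R.Δ0) (hb : b ∈ R.Δ0) (hab : a ≠ b)
    (hi : ⟪a, b⟫ ≠ 0) : 2 * ⟪a, b⟫ ≤ -⟪b, b⟫ := by
  obtain ⟨k, hk⟩ := R.crystal b (R.base_sub hb) a (R.base_sub ha)
  have hbb := R.inner_self_pos' (R.base_sub hb)
  have hneg : ⟪a, b⟫ < 0 := lt_of_le_of_ne (R.inner_nonpos_of_ne ha hb hab) hi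
  have hkneg : (k : ℝ) < 0 := by
    rw [← hk]; apply div_neg_of_neg_of_pos <;> nlinarith
  have hk1 : (k : ℝ) ≤ -1 := by
    have h1 : k < 0 := by exact_mod_cast hkneg
    have h2 : k ≤ -1 := by omega
    exact_mod_cast h2
  have heq : 2 * ⟪a, b⟫ = k * ⟪b, b⟫ := by
    field_simp at hk; linarith [hk]
  nlinarith

end RootSystemBase
namespace RootSystemBase

variable {V : Type*} [NormedAddCommGroup V] [InnerProductSpace ℝ V] (R : RootSystemBase V)

lemma no_cycle {n : ℕ} [NeZero n] (f : Fin n → V) (hn : 3 ≤ n) (hinj : Function.Injective f)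
    (hmem : ∀ i, f i ∈ R.Δ0)
    (hE : ∀ i : Fin n, f i ≠ f (i + 1) ∧ ⟪f i, f (i + 1)⟫ ≠ 0) : False := by
  have hval1 : ((1 : Fin n) : ℕ) = 1 := by
    rw [Fin.val_one']; exact Nat.mod_eq_of_lt (by omega)
  have hval2 : ((2 : Fin n) : ℕ) = 2 := by
    have h11 : ((2 : Fin n)) = (1 + 1 : Fin n) := by ext; simp [Fin.val_add]
    rw [h11, Fin.val_add, hval1]
    exact Nat.mod_eq_of_lt (by omega)
  have h1ne0 : (1 : Fin n) ≠ 0 := by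
    intro h; have := congrArg Fin.val h; rw [hval1] at this; simp at this
  have h2ne0 : (2 : Fin n) ≠ 0 := by
    intro h; have := congrArg Fin.val h; rw [hval2] at this; simp at this
  have hii1 : ∀ i : Fin n, i ≠ i + 1 := fun i h => h1ne0 (left_eq_add.mp h)
  have hii1' : ∀ i : Fin n, i ≠ i - 1 := by
    intro i h
    apply h1ne0
    have h2 : i - (i - 1) = 0 := by rw [← h]; exact sub_self i
    rwa [sub_sub_cancel] at h2
  have hi11 : ∀ i : Fin n, i + 1 ≠ i - 1 := by
    intro i h
    apply h2ne0
    have h2 : (i + 1) - (i - 1) = 0 := by rw [h]; exact sub_self _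
    have h3 : (i + 1) - (i - 1) = 2 := by rw [add_sub_sub_cancel]; ext; simp [Fin.val_add]
    rwa [h3] at h2
  set v : V := ∑ i : Fin n, f i with hv
  have hstrong : ∀ i : Fin n, 2 * ⟪f (i + 1), f i⟫ ≤ -⟪f i, f i⟫ := by
    intro i
    obtain ⟨hne, hinner⟩ := hE i
    exact R.strong_neighbor (hmem _) (hmem _) (Ne.symm hne) (by rwa [real_inner_comm])
  have hstrong' : ∀ i : Fin n, 2 * ⟪f (i - 1), f i⟫ ≤ -⟪f i, f i⟫ := by
    intro i
    obtain ⟨hne, hi0⟩ := hE (i - 1)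
    rw [sub_add_cancel] at hne hi0
    exact R.strong_neighbor (hmem _) (hmem _) hne hi0
  have hvi : ∀ i : Fin n, ⟪v, f i⟫ ≤ 0 := by
    intro i
    rw [hv, sum_inner]
    set g : Fin n → ℝ := fun j => ⟪f j, f i⟫ with hg
    set s : Finset (Fin n) := {i, i + 1, i - 1} with hs
    have hsum : ∑ j ∈ Finset.univ \ s, g j + ∑ j ∈ s, g j = ∑ j : Fin n, g j :=
      Finset.sum_sdiff (Finset.subset_univ s)
    have hs_sum : ∑ j ∈ s, g j = g i + g (i + 1) + g (i - 1) := by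
      rw [hs, Finset.sum_insert (by
          simp only [Finset.mem_insert, Finset.mem_singleton]
          push_neg
          exact ⟨hii1 i, hii1' i⟩),
        Finset.sum_insert (by simpa using hi11 i), Finset.sum_singleton]
      ring
    have hsd : ∑ j ∈ Finset.univ \ s, g j ≤ 0 := by
      apply Finset.sum_nonpos
      intro j hj
      rw [Finset.mem_sdiff] at hj
      have hji : j ≠ i := fun h => hj.2 (by simp [hs, h])
      exact R.inner_nonpos_of_ne (hmem j) (hmem i) (fun h => hji (hinj h))
    have h1 := hstrong i
    have h2 := hstrong' i
    have hgi : g i = ⟪f i, f i⟫ := rfl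
    linarith [hsum, hs_sum]
  have hvv : ⟪v, v⟫ ≤ 0 := by
    have h : ⟪v, v⟫ = ∑ i : Fin n, ⟪v, f i⟫ := by rw [hv, inner_sum]
    rw [h]
    exact Finset.sum_nonpos (fun i _ => hvi i)
  set T : Finset V := Finset.image f Finset.univ with hT
  have hTsub : T ⊆ R.Δ0 := by
    intro x hx
    simp only [hT, Finset.mem_image] at hx
    obtain ⟨i, _, rfl⟩ := hx
    exact hmem i
  have hvT : v = ∑ γ ∈ R.Δ0, (if γ ∈ T then (1:ℝ) else 0) • γ := by
    simp only [ite_smul, one_smul, zero_smul]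
    rw [Finset.sum_ite_mem, Finset.inter_eq_right.mpr hTsub, hT,
      Finset.sum_image (fun a _ b _ h => hinj h)]
  have hvne : v ≠ 0 := by
    intro h0
    rw [h0] at hvT
    have h1 := R.sum_coeff_zero hvT.symm (f 0) (hmem 0)
    rw [if_pos (by simp [hT])] at h1
    norm_num at h1
  have hpos : 0 < ⟪v, v⟫ := by
    rw [real_inner_self_eq_norm_mul_norm]
    exact mul_pos (norm_pos_iff.2 hvne) (norm_pos_iff.2 hvne)
  linarith

end RootSystemBase
namespace RootSystemBase

variable {V : Type*} [NormedAddCommGroup V] [InnerProductSpace ℝ V] (R : RootSystemBase V)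

lemma cycle_of_list (C : List V) (hne : C ≠ []) (hnd : C.Nodup) (hlen : 3 ≤ C.length)
    (hmem : ∀ x ∈ C, x ∈ R.Δ0)
    (hchain : C.Chain' (fun u w => u ≠ w ∧ ⟪u, w⟫ ≠ 0))
    (hclose : C.getLast hne ≠ C.head hne ∧ ⟪C.getLast hne, C.head hne⟫ ≠ 0) : False := by
  set m := C.length with hm
  haveI : NeZero m := ⟨by omega⟩
  have hval1 : ((1 : Fin m) : ℕ) = 1 := by
    rw [Fin.val_one']; exact Nat.mod_eq_of_lt (by omega)
  apply R.no_cycle (fun i : Fin m => C.get i) hlen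
  · intro i j h
    exact (List.Nodup.get_inj_iff hnd).mp h
  · intro i
    exact hmem _ (List.get_mem C i)
  · intro i
    by_cases hi : (i : ℕ) + 1 < m
    · have hval : ((i + 1 : Fin m) : ℕ) = (i : ℕ) + 1 := by
        rw [Fin.val_add, hval1]; exact Nat.mod_eq_of_lt hi
      have h := List.isChain_iff_getElem.mp hchain i (by omega)
      have he : C.get (i + 1) = C.get ⟨(i : ℕ) + 1, by omega⟩ := by
        congr 1
        exact Fin.ext hval
      rw [he]
      exact h
    · have hival : (i : ℕ) = m - 1 := by have := i.isLt; omega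
      have hval : ((i + 1 : Fin m) : ℕ) = 0 := by
        rw [Fin.val_add, hval1, hival]
        have : m - 1 + 1 = m := by omega
        rw [this, Nat.mod_self]
      have hgl : C.get i = C.getLast hne := by
        simp only [List.get_eq_getElem]
        rw [List.getLast_eq_getElem]
        congr 1
      have hh : C.get (i + 1) = C.head hne := by
        simp only [List.get_eq_getElem]
        rw [List.head_eq_getElem_zero hne]
        congr 1
      rw [hgl, hh]
      exact hclose

end RootSystemBase
namespace RootSystemBase

variable {V : Type*} [NormedAddCommGroup V] [InnerProductSpace ℝ V] (R : RootSystemBase V)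

lemma walk_support_prop {G : SimpleGraph V} (P : V → Prop)
    (hadj : ∀ u w : V, G.Adj u w → P u) {u v : V} (hv : P v) (q : G.Walk u v) :
    ∀ x ∈ q.support, P x := by
  induction q with
  | nil =>
    intro x hx
    rw [SimpleGraph.Walk.support_nil, List.mem_singleton] at hx
    subst hx; exact hv
  | cons h q ih =>
    intro x hx
    rw [SimpleGraph.Walk.support_cons] at hx
    rcases List.mem_cons.mp hx with hx | hx
    · subst hx; exact hadj _ _ h
    · exact ih hv x hx

lemma not_mem_comp {ζ α α' : V} (hζ : ζ ∈ R.Δ0) (hα : α ∈ R.Δ0) (hα' : α' ∈ R.Δ0)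
    (hαζ : α ≠ ζ) (hα'ζ : α' ≠ ζ) (hαα' : α ≠ α')
    (h1 : ⟪ζ, α⟫ ≠ 0) (h2 : ⟪ζ, α'⟫ ≠ 0) :
    α' ∉ R.comp ζ α := by
  rintro ⟨-, -, hrel⟩
  set G : SimpleGraph V :=
    { Adj := fun u w => u ≠ w ∧ u ∈ R.Δ0 ∧ w ∈ R.Δ0 ∧ u ≠ ζ ∧ w ≠ ζ ∧ ⟪u, w⟫ ≠ 0
      symm := ⟨by
        rintro u w ⟨ha, hb, hc, hd, he, hf⟩
        exact ⟨ha.symm, hc, hb, he, hd, by rwa [real_inner_comm]⟩⟩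
      loopless := ⟨fun u h => h.1 rfl⟩ } with hG
  have hGadj : ∀ u w : V, G.Adj u w ↔
      (u ≠ w ∧ u ∈ R.Δ0 ∧ w ∈ R.Δ0 ∧ u ≠ ζ ∧ w ≠ ζ ∧ ⟪u, w⟫ ≠ 0) := by
    intro u w; rw [hG]
  have hreach : Relation.ReflTransGen G.Adj α α' := by
    refine Relation.ReflTransGen.mono ?_ _ _ hrel
    rintro u w ⟨hu, hw, huζ, hwζ, hne, hi⟩
    exact (hGadj u w).mpr ⟨hne, hu, hw, huζ, hwζ, hi⟩
  obtain ⟨wk⟩ := (SimpleGraph.reachable_iff_reflTransGen α α').mpr hreach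
  set p := wk.toPath with hp
  set L := (p : G.Walk α α').support with hL
  have hLnd : L.Nodup := p.2.support_nodup
  have hLchainG : L.Chain' G.Adj := SimpleGraph.Walk.isChain_adj_support _
  have hLne : L ≠ [] := SimpleGraph.Walk.support_ne_nil _
  have hhead : L.head hLne = α := SimpleGraph.Walk.head_support _
  have hlast : L.getLast hLne = α' := SimpleGraph.Walk.getLast_support _
  have hmemL : ∀ x ∈ L, x ∈ R.Δ0 ∧ x ≠ ζ := by
    refine walk_support_prop (fun x => x ∈ R.Δ0 ∧ x ≠ ζ) ?_ ⟨hα', hα'ζ⟩ (p : G.Walk α α')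
    intro u w h
    obtain ⟨-, hu, -, huζ, -, -⟩ := (hGadj _ _).mp h
    exact ⟨hu, huζ⟩
  have hζL : ζ ∉ L := fun h => (hmemL ζ h).2 rfl
  -- L has length at least 2
  have hLlen : 2 ≤ L.length := by
    rcases L with - | ⟨x, L'⟩
    · exact absurd rfl hLne
    rcases L' with - | ⟨y, L''⟩
    · exfalso
      apply hαα'
      rw [← hhead, ← hlast]
      rfl
    · simp only [List.length_cons]; omega
  -- build the cycle list
  set C : List V := ζ :: L with hC
  have hCne : C ≠ [] := by simp [hC]
  have hCnd : C.Nodup := List.nodup_cons.mpr ⟨hζL, hLnd⟩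
  have hClen : 3 ≤ C.length := by
    rw [hC, List.length_cons]; omega
  have hCmem : ∀ x ∈ C, x ∈ R.Δ0 := by
    intro x hx
    rcases List.mem_cons.mp hx with hx | hx
    · subst hx; exact hζ
    · exact (hmemL x hx).1
  have hLchain : L.Chain' (fun u w => u ≠ w ∧ ⟪u, w⟫ ≠ 0) := by
    refine List.IsChain.imp ?_ hLchainG
    intro a b hab
    obtain ⟨hne, -, -, -, -, hi⟩ := (hGadj a b).mp hab
    exact ⟨hne, hi⟩
  obtain ⟨x, L', hxL⟩ := List.exists_cons_of_ne_nil hLne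
  have hxα : x = α := by
    have h' : L.head? = some α := by rw [List.head?_eq_head hLne, hhead]
    rw [hxL] at h'
    exact (Option.some_injective _ h').symm ▸ rfl
  have hCchain : C.Chain' (fun u w => u ≠ w ∧ ⟪u, w⟫ ≠ 0) := by
    rw [hC, hxL, List.Chain', List.isChain_cons_cons]
    constructor
    · rw [hxα]; exact ⟨Ne.symm hαζ, h1⟩
    · rw [← hxL]; exact hLchain
  have hCl : C.getLast hCne = α' := (List.getLast_cons hLne).trans hlast
  have hCh : C.head hCne = ζ := rfl
  apply R.cycle_of_list C hCne hCnd hClen hCmem hCchain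
  rw [hCl, hCh]
  exact ⟨hα'ζ, by rwa [real_inner_comm]⟩

end RootSystemBase
/-- Let `Δ` be the root system of a complex simple Lie algebra with
base `Δ⁰`, and let `Σ ⊆ Δ⁰` be nonempty with a root `ζ` adjacent to every other root
of `Σ`.  If `α, α′ ∈ Σ∖{ζ}` are distinct, `β ∈ Υ¹_α` and `β′ ∈ Υ¹_{α′}`, then
`β + β′` is not a root. -/
theorem statement7 {V : Type*} [NormedAddCommGroup V] [InnerProductSpace ℝ V]
    (R : RootSystemBase V) (hirr : R.Irred)
    (Sg : Finset V) (hSg : Sg ⊆ R.Δ0)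
    (ζ : V) (hζ : ζ ∈ Sg) (hadj : ∀ a ∈ Sg, a ≠ ζ → RootSystemBase.Adj ζ a)
    (α α' : V) (hα : α ∈ Sg) (hα' : α' ∈ Sg) (hαζ : α ≠ ζ) (hα'ζ : α' ≠ ζ)
    (hαα' : α ≠ α')
    (β β' : V) (hβ : β ∈ R.Ups1 ζ α) (hβ' : β' ∈ R.Ups1 ζ α') :
    β + β' ∉ R.Δ := by
  classical
  obtain ⟨hβΔ, n, hn, hβeq⟩ := hβ
  obtain ⟨hβ'Δ, n', hn', hβ'eq⟩ := hβ'
  have hζ0 : ζ ∈ R.Δ0 := hSg hζ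
  have hα0 : α ∈ R.Δ0 := hSg hα
  have hα'0 : α' ∈ R.Δ0 := hSg hα'
  obtain ⟨hζα_ne, hζα_in⟩ := hadj α hα hαζ
  obtain ⟨hζα'_ne, hζα'_in⟩ := hadj α' hα' hα'ζ
  have hnc : α' ∉ R.comp ζ α :=
    R.not_mem_comp hζ0 hα0 hα'0 hαζ hα'ζ hαα' hζα_in hζα'_in
  have hnc' : α ∉ R.comp ζ α' :=
    R.not_mem_comp hζ0 hα'0 hα0 hα'ζ hαζ (Ne.symm hαα') hζα'_in hζα_in
  have hsymm : Symmetric (fun u w : V =>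
      u ∈ R.Δ0 ∧ w ∈ R.Δ0 ∧ u ≠ ζ ∧ w ≠ ζ ∧ RootSystemBase.Adj u w) := by
    rintro u w ⟨h1, h2, h3, h4, h5, h6⟩
    exact ⟨h2, h1, h4, h3, h5.symm, by rwa [real_inner_comm]⟩
  have hαmem : α ∈ R.comp ζ α := ⟨hα0, hαζ, Relation.ReflTransGen.refl⟩
  have hα'mem : α' ∈ R.comp ζ α' := ⟨hα'0, hα'ζ, Relation.ReflTransGen.refl⟩
  have hdisj : ∀ γ : V, γ ∈ R.comp ζ α → γ ∉ R.comp ζ α' := by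
    rintro γ ⟨hγ0, hγζ, hγrel⟩ ⟨-, -, hγrel'⟩
    exact hnc ⟨hα'0, hα'ζ, hγrel.trans ((@Relation.ReflTransGen.symmetric _ _ ⟨fun a b h => hsymm h⟩).symm _ _ hγrel')⟩
  have horth : ∀ x ∈ R.comp ζ α, ∀ y ∈ R.comp ζ α', ⟪x, y⟫ = 0 := by
    intro x hx y hy
    by_contra hxy
    have hne : x ≠ y := fun h => hdisj x hx (h ▸ hy)
    apply hdisj y _ hy
    obtain ⟨hx0, hxζ, hxrel⟩ := hx
    obtain ⟨hy0, hyζ, -⟩ := hy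
    exact ⟨hy0, hyζ, hxrel.tail ⟨hx0, hy0, hxζ, hyζ, hne, hxy⟩⟩
  have hβy : ∀ y ∈ R.comp ζ α', ⟪β, y⟫ = 0 := by
    intro y hy
    rw [hβeq, inner_add_left, sum_inner, horth α hαmem y hy,
      Finset.sum_eq_zero, add_zero]
    intro γ hγ
    by_cases hnγ : n γ = 0
    · simp [hnγ]
    · rw [real_inner_smul_left, horth γ (hn γ hnγ).1 y hy, mul_zero]
  have hββ' : ⟪β', β⟫ = 0 := by
    have h1 : (⟪α', β⟫ : ℝ) = 0 := by rw [real_inner_comm]; exact hβy α' hα'mem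
    have h2 : ∀ γ ∈ R.Δ0, (⟪(n' γ : ℝ) • γ, β⟫ : ℝ) = 0 := by
      intro γ hγ
      by_cases hnγ : n' γ = 0
      · simp [hnγ]
      · rw [real_inner_smul_left, real_inner_comm, hβy γ (hn' γ hnγ).1, mul_zero]
    rw [hβ'eq, inner_add_left, sum_inner, h1, Finset.sum_eq_zero h2, add_zero]
  intro hsum
  have hββpos : 0 < ⟪β, β⟫ := R.inner_self_pos' hβΔ
  have hscal : 2 * ⟪β + β', β⟫ / ⟪β, β⟫ = 2 := by
    rw [inner_add_left, hββ', add_zero]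
    field_simp
  have hroot := R.reflect_mem β hβΔ (β + β') hsum
  rw [hscal] at hroot
  have hδ : β + β' - (2 : ℝ) • β = β' - β := by
    rw [two_smul]; abel
  rw [hδ] at hroot
  set c : V → ℝ := fun γ => (if γ = α then (1:ℝ) else 0) + (n γ : ℝ) with hc
  set c' : V → ℝ := fun γ => (if γ = α' then (1:ℝ) else 0) + (n' γ : ℝ) with hc'
  have hβc : β = ∑ γ ∈ R.Δ0, c γ • γ := by
    simp only [hc, add_smul, Finset.sum_add_distrib]
    rw [R.single_expand hα0, ← hβeq]
  have hβ'c : β' = ∑ γ ∈ R.Δ0, c' γ • γ := by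
    simp only [hc', add_smul, Finset.sum_add_distrib]
    rw [R.single_expand hα'0, ← hβ'eq]
  have hδc : β' - β = ∑ γ ∈ R.Δ0, (c' γ - c γ) • γ := by
    simp only [sub_smul, Finset.sum_sub_distrib]
    rw [← hβc, ← hβ'c]
  have hcu := R.coeff_unique hroot _ hδc
  have hnα : n α = 0 := by
    by_contra h; exact (hn α h).2 rfl
  have hn'α : n' α = 0 := by
    by_contra h; exact hnc' (hn' α h).1
  have hnα' : n α' = 0 := by
    by_contra h; exact hnc (hn α' h).1
  have hn'α' : n' α' = 0 := by
    by_contra h; exact (hn' α' h).2 rfl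
  have hvα : (R.coeff (β' - β) α : ℝ) = -1 := by
    rw [hcu α hα0]; simp [hc, hc', hαα', hnα, hn'α]
  have hvα' : (R.coeff (β' - β) α' : ℝ) = 1 := by
    rw [hcu α' hα'0]; simp [hc, hc', Ne.symm hαα', hnα', hn'α']
  have hiα : R.coeff (β' - β) α = -1 := by exact_mod_cast hvα
  have hiα' : R.coeff (β' - β) α' = 1 := by exact_mod_cast hvα'
  rcases R.coeff_sign _ hroot with hp | hng
  · have := hp α hα0; omega
  · have := hng α' hα'0; omega
end

section
/- Let Δ be the root system of a complex simple Lie algebra with simple roots α₁, …, α_ℓ, highest root θ, Weyl group W, and let Σ be a nonempty subset of the simple roots. Suppose σ = s_i ∘ s_j with i ≠ j satisfies Δ_σ ⊆ Δ⁺_Σ (i.e. σ ∈ W²_Σ). Then: (a) Δ_σ = {α_i, s_i(α_j)}; (b) α_i ∈ Σ; and (c) −ht_Σ(σ(θ)) + ht_Σ(α_i) + ht_Σ(s_i(α_j)) = −ht_Σ(θ) + ⟨θ, α_i⟩ + 1 + (⟨θ, α_j⟩ + 1)·ht_Σ(s_i(α_j)). -/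
open scoped RealInnerProductSpace BigOperators Classical

namespace RootSystemBase

variable {V : Type*} [NormedAddCommGroup V] [InnerProductSpace ℝ V]

/-- The Cartan pairing `⟨a, b⟩ = 2(a,b)/(b,b)`. -/
noncomputable def cInt (a b : V) : ℝ := 2 * ⟪a, b⟫ / ⟪b, b⟫

end RootSystemBase

namespace RootSystemBase

variable {V : Type*} [NormedAddCommGroup V] [InnerProductSpace ℝ V]

/-- The reflection `s_a` in the root `a`:  `s_a(v) = v - ⟨v, a⟩ a`. -/
noncomputable def refl (a v : V) : V := v - cInt v a • a

variable (R : RootSystemBase V)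

/-- `θ` is the highest root. -/
def IsHighest (θ : V) : Prop :=
  θ ∈ R.Δ ∧ ∀ β ∈ R.Δ, ∀ α ∈ R.Δ0, R.coeff β α ≤ R.coeff θ α

/-- `Δ_σ = σ(Δ⁻) ∩ Δ⁺` for the length-two Weyl group element `σ = s_a ∘ s_b`;
equivalently the positive roots mapped to negative roots by `σ⁻¹ = s_b ∘ s_a`. -/
noncomputable def Dsig (a b : V) : Finset V :=
  R.Δ.filter (fun β => R.IsPos β ∧ R.IsNeg (refl b (refl a β)))

/-- The grading determined by `Sg` is *non-rigid*:  there is `σ = s_a ∘ s_b ∈ W²_Σ`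
(`a ≠ b` simple, `Δ_σ ⊆ Δ⁺_Σ`, `|Δ_σ| = 2`) whose harmonic representative has
positive homogeneity weight, i.e.
`⟨θ, a⟩ + (⟨θ, b⟩ + 1)·ht_Σ(s_a(b)) ≥ ht_Σ(θ)`.  By Kostant's theorem this is
equivalent to the nonvanishing of `H²(𝔤₋, 𝔤)` in some positive homogeneity weight. -/
noncomputable def NonRigid (Sg : Finset V) (θ : V) : Prop :=
  ∃ a ∈ R.Δ0, ∃ b ∈ R.Δ0, a ≠ b ∧
    (R.Dsig a b).card = 2 ∧ (∀ β ∈ R.Dsig a b, 0 < R.ht Sg β) ∧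
    (R.ht Sg θ : ℝ) ≤ cInt θ a + (cInt θ b + 1) * (R.ht Sg (refl a b) : ℝ)

end RootSystemBase

section Aux

namespace RootSystemBase

variable {V : Type*} [NormedAddCommGroup V] [InnerProductSpace ℝ V] (R : RootSystemBase V)

lemma zero_coeffs (c : V → ℝ) (h : ∑ α ∈ R.Δ0, c α • α = 0) : ∀ α ∈ R.Δ0, c α = 0 := by
  intro α hα
  have h2 : ∑ i : ↥R.Δ0, c i • (i : V) = 0 := by
    rw [Finset.sum_coe_sort R.Δ0 (fun x => c x • x)]
    exact h
  exact Fintype.linearIndependent_iff.mp R.indep (fun i => c i) h2 ⟨α, hα⟩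

lemma coeff_eq {β : V} (hβ : β ∈ R.Δ) (c : V → ℝ)
    (h : β = ∑ α ∈ R.Δ0, c α • α) : ∀ α ∈ R.Δ0, c α = (R.coeff β α : ℝ) := by
  intro α hα
  have h0 : ∑ γ ∈ R.Δ0, (c γ - (R.coeff β γ : ℝ)) • γ = 0 := by
    simp only [sub_smul, Finset.sum_sub_distrib, ← h]
    rw [← R.coeff_spec β hβ, sub_self]
  have := zero_coeffs R _ h0 α hα
  linarith

lemma coeff_neg' {β : V} (hβ : β ∈ R.Δ) : ∀ α ∈ R.Δ0, (R.coeff (-β) α : ℝ) = -(R.coeff β α : ℝ) := by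
  intro α hα
  refine (coeff_eq R (R.neg_mem β hβ) (fun γ => -(R.coeff β γ : ℝ)) ?_ α hα).symm
  conv_lhs => rw [R.coeff_spec β hβ]
  simp [neg_smul, ← Finset.sum_neg_distrib]

lemma coeff_simple' {a : V} (ha : a ∈ R.Δ0) :
    ∀ γ ∈ R.Δ0, (R.coeff a γ : ℝ) = if γ = a then 1 else 0 := by
  intro γ hγ
  refine (coeff_eq R (R.base_sub ha) (fun γ => if γ = a then (1:ℝ) else 0) ?_ γ hγ).symm
  simp [ite_smul, Finset.sum_ite_eq', ha]

lemma refl_mem {α β : V} (hα : α ∈ R.Δ) (hβ : β ∈ R.Δ) : refl α β ∈ R.Δ :=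
  R.reflect_mem α hα β hβ

lemma coeff_refl' {a β : V} (ha : a ∈ R.Δ0) (hβ : β ∈ R.Δ) :
    ∀ γ ∈ R.Δ0, (R.coeff (refl a β) γ : ℝ) =
      (R.coeff β γ : ℝ) - if γ = a then cInt β a else 0 := by
  intro γ hγ
  refine (coeff_eq R (refl_mem R (R.base_sub ha) hβ)
    (fun γ => (R.coeff β γ : ℝ) - if γ = a then cInt β a else 0) ?_ γ hγ).symm
  show β - cInt β a • a = _
  nth_rewrite 1 [R.coeff_spec β hβ]
  rw [Finset.sum_congr rfl (fun γ _ => sub_smul ((R.coeff β γ : ℝ)) _ γ)]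
  rw [Finset.sum_sub_distrib]
  congr 1
  simp [ite_smul, Finset.sum_ite_eq', ha]

lemma cInt_sub_smul (v w u : V) (t : ℝ) : cInt (v - t • w) u = cInt v u - t * cInt w u := by
  unfold cInt
  rw [inner_sub_left, real_inner_smul_left]
  ring

lemma cInt_neg (v u : V) : cInt (-v) u = -cInt v u := by
  unfold cInt
  rw [inner_neg_left]
  ring

lemma inner_self_ne {a : V} (ha : a ∈ R.Δ) : ⟪a, a⟫ ≠ 0 :=
  inner_self_ne_zero.mpr (R.ne_zero a ha)

lemma cInt_self {a : V} (h : ⟪a, a⟫ ≠ 0) : cInt a a = 2 := by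
  unfold cInt
  field_simp

lemma refl_refl {a : V} (h : ⟪a, a⟫ ≠ 0) (v : V) : refl a (refl a v) = v := by
  unfold refl
  rw [cInt_sub_smul, cInt_self h]
  module

lemma refl_neg (a v : V) : refl a (-v) = -(refl a v) := by
  unfold refl
  rw [cInt_neg]
  module

lemma refl_self {a : V} (h : ⟪a, a⟫ ≠ 0) : refl a a = -a := by
  unfold refl
  rw [cInt_self h]
  module

lemma pos_simple {a : V} (ha : a ∈ R.Δ0) : R.IsPos a := by
  refine ⟨R.base_sub ha, fun γ hγ => ?_⟩
  have h := coeff_simple' R ha γ hγ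
  have : (0:ℝ) ≤ (R.coeff a γ : ℝ) := by rw [h]; split <;> norm_num
  exact_mod_cast this

lemma not_pos_neg {β : V} (hβ : β ∈ R.Δ) (hp : R.IsPos β) (hn : R.IsNeg β) : False := by
  apply R.ne_zero β hβ
  rw [R.coeff_spec β hβ]
  apply Finset.sum_eq_zero
  intro γ hγ
  have : R.coeff β γ = 0 := le_antisymm (hn.2 γ hγ) (hp.2 γ hγ)
  simp [this]

lemma neg_isNeg {β : V} (hβ : β ∈ R.Δ) (hp : R.IsPos β) : R.IsNeg (-β) := by
  refine ⟨R.neg_mem β hβ, fun γ hγ => ?_⟩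
  have h := coeff_neg' R hβ γ hγ
  have h2 := hp.2 γ hγ
  have : (R.coeff (-β) γ : ℝ) ≤ 0 := by
    rw [h]; simp; exact_mod_cast h2
  exact_mod_cast this

lemma refl_pos {a β : V} (ha : a ∈ R.Δ0) (hβ : β ∈ R.Δ) (hp : R.IsPos β) (hne : β ≠ a) :
    R.IsPos (refl a β) := by
  have hmem := refl_mem R (R.base_sub ha) hβ
  rcases R.coeff_sign _ hmem with h | h
  · exact ⟨hmem, h⟩
  exfalso
  have haa := inner_self_ne R (R.base_sub ha)
  -- every coefficient of β away from a vanishes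
  have hz : ∀ γ ∈ R.Δ0, γ ≠ a → R.coeff β γ = 0 := by
    intro γ hγ hga
    have h1 := coeff_refl' R ha hβ γ hγ
    rw [if_neg hga, sub_zero] at h1
    have h2 : (R.coeff (refl a β) γ : ℝ) ≤ 0 := by exact_mod_cast h γ hγ
    have h3 : (0:ℝ) ≤ (R.coeff β γ : ℝ) := by exact_mod_cast hp.2 γ hγ
    have : (R.coeff β γ : ℝ) = 0 := le_antisymm (h1 ▸ h2) h3
    exact_mod_cast this
  set n := R.coeff β a with hn
  have hβeq : β = (n : ℝ) • a := by
    rw [R.coeff_spec β hβ]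
    rw [Finset.sum_eq_single a]
    · intro γ hγ hga
      rw [hz γ hγ hga]; simp
    · intro hna; exact absurd ha hna
  have hn0 : 0 ≤ n := hp.2 a ha
  have hnne : n ≠ 0 := by
    intro h0
    exact R.ne_zero β hβ (by simp [hβeq, h0])
  have hn1 : n ≠ 1 := by
    intro h1
    exact hne (by simp [hβeq, h1])
  have hn2 : 2 ≤ n := by omega
  obtain ⟨k, hk⟩ := R.crystal β hβ a (R.base_sub ha)
  rw [hβeq, real_inner_smul_right, real_inner_smul_left, real_inner_smul_right] at hk
  have hnR : ((n:ℝ)) ≠ 0 := Int.cast_ne_zero.mpr hnne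
  have hkn : (k : ℝ) * n = 2 := by
    field_simp at hk
    have h' : ((k:ℝ) * n) * ((n:ℝ) * ⟪a, a⟫) = 2 * ((n:ℝ) * ⟪a, a⟫) := by linear_combination -((n:ℝ) * ⟪a, a⟫) * hk
    exact mul_right_cancel₀ (mul_ne_zero hnR haa) h'
  have hkn' : k * n = 2 := by exact_mod_cast hkn
  have hdvd : n ∣ 2 := Dvd.intro_left k hkn'
  have hle : n ≤ 2 := Int.le_of_dvd (by norm_num) hdvd
  have hn2' : n = 2 := le_antisymm hle hn2
  apply R.reduced a (R.base_sub ha)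
  have : (2:ℝ) • a = β := by rw [hβeq, hn2']; norm_num
  rw [this]; exact hβ

lemma ht_cast (Sg : Finset V) (β : V) : (R.ht Sg β : ℝ) = ∑ γ ∈ Sg, (R.coeff β γ : ℝ) := by
  unfold ht
  push_cast
  rfl

lemma ht_refl (Sg : Finset V) (hSg : Sg ⊆ R.Δ0) {a β : V} (ha : a ∈ R.Δ0) (hβ : β ∈ R.Δ) :
    (R.ht Sg (refl a β) : ℝ) = (R.ht Sg β : ℝ) - if a ∈ Sg then cInt β a else 0 := by
  rw [ht_cast, ht_cast]
  rw [Finset.sum_congr rfl (fun γ hγ => coeff_refl' R ha hβ γ (hSg hγ))]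
  rw [Finset.sum_sub_distrib, Finset.sum_ite_eq' Sg a (fun _ => cInt β a)]

lemma ht_simple (Sg : Finset V) (hSg : Sg ⊆ R.Δ0) {a : V} (ha : a ∈ R.Δ0) :
    (R.ht Sg a : ℝ) = if a ∈ Sg then 1 else 0 := by
  rw [ht_cast]
  rw [Finset.sum_congr rfl (fun γ hγ => coeff_simple' R ha γ (hSg hγ))]
  rw [Finset.sum_ite_eq' Sg a (fun _ => (1:ℝ))]

end RootSystemBase
end Aux


open RootSystemBase

/-- Let `Δ` be an irreducible root system with base
`Δ⁰`, highest root `θ`, and let `Σ ⊆ Δ⁰` be nonempty.  Suppose `σ = s_a ∘ s_b`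
(`a ≠ b` simple) satisfies `Δ_σ ⊆ Δ⁺_Σ` (i.e. `σ ∈ W²_Σ`).  Then
(a) `Δ_σ = {a, s_a(b)}`; (b) `a ∈ Σ`; and (c) the homogeneity weight formula
`-ht_Σ(σ(θ)) + ht_Σ(a) + ht_Σ(s_a(b)) = -ht_Σ(θ) + ⟨θ,a⟩ + 1 + (⟨θ,b⟩+1)·ht_Σ(s_a(b))`
holds. -/
theorem statement12 {V : Type*} [NormedAddCommGroup V] [InnerProductSpace ℝ V]
    (R : RootSystemBase V) (hirr : R.Irred)
    (Sg : Finset V) (hSg : Sg ⊆ R.Δ0) (hne : Sg.Nonempty)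
    (θ : V) (hθ : R.IsHighest θ)
    (a b : V) (ha : a ∈ R.Δ0) (hb : b ∈ R.Δ0) (hab : a ≠ b)
    (hW : ∀ β ∈ R.Dsig a b, 0 < R.ht Sg β) :
    R.Dsig a b = ({a, RootSystemBase.refl a b} : Finset V) ∧
    a ∈ Sg ∧
    (-(R.ht Sg (RootSystemBase.refl a (RootSystemBase.refl b θ)) : ℝ)
        + (R.ht Sg a : ℝ) + (R.ht Sg (RootSystemBase.refl a b) : ℝ) =
      -(R.ht Sg θ : ℝ) + RootSystemBase.cInt θ a + 1 +
        (RootSystemBase.cInt θ b + 1) * (R.ht Sg (RootSystemBase.refl a b) : ℝ)) := by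
  have haD := R.base_sub ha
  have hbD := R.base_sub hb
  have haa := R.inner_self_ne haD
  have hbb := R.inner_self_ne hbD
  have hDsig : R.Dsig a b = ({a, RootSystemBase.refl a b} : Finset V) := by
    ext β
    simp only [RootSystemBase.Dsig, Finset.mem_filter, Finset.mem_insert, Finset.mem_singleton]
    constructor
    · rintro ⟨hβ, hpos, hneg⟩
      by_cases h1 : β = a
      · exact Or.inl h1
      have hra := R.refl_pos ha hβ hpos h1
      have hraD := R.refl_mem haD hβ
      by_cases h2 : RootSystemBase.refl a β = b
      · right
        rw [← h2]
        exact (refl_refl haa β).symm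
      · exact absurd hneg fun hn =>
          R.not_pos_neg (R.refl_mem hbD hraD) (R.refl_pos hb hraD hra h2) hn
    · rintro (h | h) <;> rw [h]
      · refine ⟨haD, R.pos_simple ha, ?_⟩
        rw [refl_self haa, refl_neg b a]
        exact R.neg_isNeg (R.refl_mem hbD haD) (R.refl_pos hb haD (R.pos_simple ha) hab)
      · refine ⟨R.refl_mem haD hbD,
          R.refl_pos ha hbD (R.pos_simple hb) (Ne.symm hab), ?_⟩
        rw [refl_refl haa b, refl_self hbb]
        exact R.neg_isNeg hbD (R.pos_simple hb)
  have haSg : a ∈ Sg := by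
    have hmem : a ∈ R.Dsig a b := by rw [hDsig]; exact Finset.mem_insert_self _ _
    have h0 := hW a hmem
    by_contra hnot
    have h := R.ht_simple Sg hSg ha
    rw [if_neg hnot] at h
    have : (0:ℝ) < (R.ht Sg a : ℝ) := by exact_mod_cast h0
    rw [h] at this
    exact lt_irrefl _ this
  refine ⟨hDsig, haSg, ?_⟩
  have hθD := hθ.1
  have hbθ := R.refl_mem hbD hθD
  have e1 := R.ht_refl Sg hSg ha hbθ
  have e2 := R.ht_refl Sg hSg hb hθD
  have e3 := R.ht_refl Sg hSg ha hbD
  have e4 := R.ht_simple Sg hSg ha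
  have e5 := R.ht_simple Sg hSg hb
  have e6 : cInt (RootSystemBase.refl b θ) a = cInt θ a - cInt θ b * cInt b a := by
    rw [show RootSystemBase.refl b θ = θ - cInt θ b • b from rfl, cInt_sub_smul]
  rw [if_pos haSg] at e1 e3 e4
  by_cases hbSg : b ∈ Sg
  · rw [if_pos hbSg] at e2 e5
    rw [e1, e2, e3, e4, e5, e6]
    ring
  · rw [if_neg hbSg] at e2 e5
    rw [e1, e2, e3, e4, e5, e6]
    ring
end
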